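/- Let λ = (λ_1,…,λ_k) be a nonnegative rate vector, 0 ≤ ρ ≤ 1, t ≥ 0, and n₁, n₂ ∈ ℕ₀. Then Σ_{Θ(k,n₁,n₂)} ∏_{j=1}^{k} ( (x_j + y_j choose x_j) ρ^{x_j} (1−ρ)^{y_j} (λ_j t)^{x_j + y_j} / (x_j + y_j)! · e^{−λ_j t} ) = p(ρλ; n₁, t) · p((1−ρ)λ; n₂, t), where Θ(k,n₁,n₂) = {(x,y) ∈ ℕ₀^k × ℕ₀^k : Σ_{j=1}^k j·x_j = n₁ and Σ_{j=1}^k j·y_j = n₂}, ρλ = (ρλ_1,…,ρλ_k) and (1−ρ)λ = ((1−ρ)λ_1,…,(1−ρ)λ_k). In words: when each jump of a GCP is routed to a first split component with probability ρ and to a second with probability 1−ρ by independent coin flips, the joint law of the two split components at time t factorizes into the product of two GCP laws with rates ρλ_j and (1−ρ)λ_j; hence the split components are independent GCPs. -/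

import Mathlib

open Finset

/-- The set `Ω(k, n)` of tuples `x : Fin k → ℕ` with `∑_{j=1}^k j * x_j = n`
(`j : Fin k` represents the jump size `j + 1`). -/
def gcpOmega (k n : ℕ) : Finset (Fin k → ℕ) :=
  (Fintype.piFinset fun _ : Fin k => Finset.range (n + 1)).filter
    fun x => ∑ j : Fin k, (j.1 + 1) * x j = n

/-- The probability mass function of the generalized counting process with jump
rates `lam j` for jumps of size `j + 1`, evaluated at state `n` and time `t`. -/
noncomputable def gcpPMF (k : ℕ) (lam : Fin k → ℝ) (n : ℕ) (t : ℝ) : ℝ :=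
  ∑ x ∈ gcpOmega k n,
    ∏ j : Fin k, (lam j * t) ^ (x j) / (Nat.factorial (x j)) * Real.exp (-(lam j * t))

lemma gcp_split_term (ρ l t : ℝ) (x y : ℕ) :
    (Nat.choose (x + y) x) * ρ ^ x * (1 - ρ) ^ y *
      (l * t) ^ (x + y) / (Nat.factorial (x + y)) * Real.exp (-(l * t))
    = ((ρ * l * t) ^ x / (Nat.factorial x) * Real.exp (-(ρ * l * t))) *
      (((1 - ρ) * l * t) ^ y / (Nat.factorial y) * Real.exp (-((1 - ρ) * l * t))) := by
  have hexp : Real.exp (-(ρ * l * t)) * Real.exp (-((1 - ρ) * l * t))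
      = Real.exp (-(l * t)) := by
    rw [← Real.exp_add]; ring_nf
  have hc : ((x + y).choose x : ℝ) * (Nat.factorial x) * (Nat.factorial y)
      = ((x + y).factorial : ℝ) := by
    rw [Nat.choose_symm_add]
    exact_mod_cast Nat.add_choose_mul_factorial_mul_factorial x y
  have hx : (Nat.factorial x : ℝ) ≠ 0 := Nat.cast_ne_zero.mpr (Nat.factorial_ne_zero x)
  have hy : (Nat.factorial y : ℝ) ≠ 0 := Nat.cast_ne_zero.mpr (Nat.factorial_ne_zero y)
  have hxy : ((x + y).factorial : ℝ) ≠ 0 := Nat.cast_ne_zero.mpr (Nat.factorial_ne_zero _)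
  rw [show ((ρ * l * t) ^ x / (Nat.factorial x) * Real.exp (-(ρ * l * t))) *
      (((1 - ρ) * l * t) ^ y / (Nat.factorial y) * Real.exp (-((1 - ρ) * l * t)))
      = ((ρ * l * t) ^ x / (Nat.factorial x)) * (((1 - ρ) * l * t) ^ y / (Nat.factorial y))
        * (Real.exp (-(ρ * l * t)) * Real.exp (-((1 - ρ) * l * t))) by ring, hexp]
  rw [pow_add, mul_pow, mul_pow, mul_pow, mul_pow]
  field_simp
  rw [show ((1 - ρ) * l * t) ^ y = (1 - ρ) ^ y * l ^ y * t ^ y by rw [mul_pow, mul_pow]]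
  linear_combination (ρ ^ x * (1 - ρ) ^ y * l ^ x * t ^ x * l ^ y * t ^ y) * hc

theorem type_I_splitting_two_components (k : ℕ) (hk : 1 ≤ k) (lam : Fin k → ℝ)
    (hlam : ∀ j, 0 ≤ lam j) (ρ : ℝ) (hρ0 : 0 ≤ ρ) (hρ1 : ρ ≤ 1)
    (t : ℝ) (ht : 0 ≤ t) (n₁ n₂ : ℕ) :
    ∑ p ∈ ((Fintype.piFinset fun _ : Fin k => Finset.range (n₁ + 1)) ×ˢ
        (Fintype.piFinset fun _ : Fin k => Finset.range (n₂ + 1))).filter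
        (fun p => (∑ j : Fin k, (j.1 + 1) * p.1 j = n₁) ∧
          (∑ j : Fin k, (j.1 + 1) * p.2 j = n₂)),
      ∏ j : Fin k,
        ((Nat.choose (p.1 j + p.2 j) (p.1 j)) * ρ ^ (p.1 j) * (1 - ρ) ^ (p.2 j) *
          (lam j * t) ^ (p.1 j + p.2 j) / (Nat.factorial (p.1 j + p.2 j)) *
          Real.exp (-(lam j * t)))
      = gcpPMF k (fun j => ρ * lam j) n₁ t * gcpPMF k (fun j => (1 - ρ) * lam j) n₂ t := by
  have hset : ((Fintype.piFinset fun _ : Fin k => Finset.range (n₁ + 1)) ×ˢ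
        (Fintype.piFinset fun _ : Fin k => Finset.range (n₂ + 1))).filter
        (fun p => (∑ j : Fin k, (j.1 + 1) * p.1 j = n₁) ∧
          (∑ j : Fin k, (j.1 + 1) * p.2 j = n₂))
      = gcpOmega k n₁ ×ˢ gcpOmega k n₂ := by
    ext p
    simp only [Finset.mem_filter, Finset.mem_product, gcpOmega]
    tauto
  rw [hset, gcpPMF, gcpPMF, Finset.sum_mul_sum, Finset.sum_product]
  refine Finset.sum_congr rfl fun x _ => Finset.sum_congr rfl fun y _ => ?_
  rw [← Finset.prod_mul_distrib]
  refine Finset.prod_congr rfl fun j _ => ?_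
  exact gcp_split_term ρ (lam j) t (x j) (y j)
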